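/- Let G and H be finite simple graphs such that |V(H)| ≤ |V(G)|, H has no isolated vertices, and H is disconnected. Then there exists an injective map φ : V(H) → V(G) such that the superposition F = G ⊕_φ H is connected if and only if both of the following hold: (i) i(G) ≤ |V(H)| − c(H), and (ii) c(G) ≤ |V(H)| − c(H) + 1, where c denotes the number of connected components and i(G) denotes the number of isolated vertices of G. -/

import Mathlib

open SimpleGraph

/-- The superposition `G ⊕_φ H` of `G` and `H` with respect to an injective map
`φ : V(H) ↪ V(G)`. -/
def superpose {α β : Type*} (G : SimpleGraph α) (H : SimpleGraph β) (φ : β ↪ α) :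
    SimpleGraph α :=
  G ⊔ SimpleGraph.map φ H

open scoped Classical

section SuperposeAux

variable {α β : Type*}




/-- walk-induction transfer: if every `B`-edge joins `A`-reachable vertices,
`B`-reachability implies `A`-reachability. -/
lemma reach_transfer {A B : SimpleGraph α}
    (h : ∀ u v, B.Adj u v → A.Reachable u v) :
    ∀ {u v : α}, B.Reachable u v → A.Reachable u v := by
  intro u v hr
  refine hr.elim fun p => ?_
  clear hr
  induction p with
  | nil => exact Reachable.refl _
  | cons hadj _ ih => exact (h _ _ hadj).trans ih

lemma conn_transfer {A B : SimpleGraph α}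
    (h : ∀ u v, B.Adj u v → A.Reachable u v) (hB : B.Connected) : A.Connected := by
  have : Nonempty α := hB.nonempty
  exact ⟨fun u v => reach_transfer h (hB.preconnected u v)⟩

/-- a set closed under adjacency absorbs reachability. -/
lemma closed_walk {A : SimpleGraph α} {Z : Set α}
    (hZ : ∀ z ∈ Z, ∀ w, A.Adj z w → w ∈ Z) :
    ∀ {u v : α}, A.Reachable u v → u ∈ Z → v ∈ Z := by
  intro u v hr
  refine hr.elim fun p => ?_
  clear hr
  induction p with
  | nil => exact id
  | cons hadj _ ih => exact fun hu => ih (hZ _ hu _ hadj)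

/-- an injective embedding of a fintype whose range contains `T` and is inside `U`. -/
lemma exists_emb {δ : Type*} [Fintype δ] [Fintype α] {T U : Finset α} (hTU : T ⊆ U)
    (h1 : T.card ≤ Fintype.card δ) (h2 : Fintype.card δ ≤ U.card) :
    ∃ f : δ ↪ α, (∀ t ∈ T, ∃ d, f d = t) ∧ ∀ x, f x ∈ U := by
  obtain ⟨V, hTV, hVU, hV⟩ := Finset.exists_subsuperset_card_eq hTU h1 h2
  have e : δ ≃ V := Fintype.equivOfCardEq (by rw [Fintype.card_coe, hV])
  refine ⟨⟨fun d => (e d : α), fun x y hxy => e.injective (Subtype.ext hxy)⟩, ?_, ?_⟩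
  · intro t ht
    exact ⟨e.symm ⟨t, hTV ht⟩, by exact congrArg Subtype.val (e.apply_symm_apply ⟨t, hTV ht⟩)⟩
  · intro x
    exact hVU (e x).2



/-- reachability inside `H` between vertices satisfying an adjacency-closed predicate
transfers to the mapped graph. -/
lemma map_reach (H : SimpleGraph β) (p : β → Prop)
    (hp : ∀ x y, H.Adj x y → p x → p y) (f : {x : β // p x} ↪ α)
    (d d' : {x : β // p x}) (hr : H.Reachable d.val d'.val) :
    (SimpleGraph.map f (SimpleGraph.comap Subtype.val H)).Reachable (f d) (f d') := by
  have aux : ∀ (u v : β) (w : H.Walk u v) (hu : p u) (hv : p v),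
      (SimpleGraph.map f (SimpleGraph.comap Subtype.val H)).Reachable (f ⟨u, hu⟩) (f ⟨v, hv⟩) := by
    intro u v w
    induction w with
    | nil => intro hu hv; exact Reachable.refl _
    | @cons a b c hadj w ih =>
      intro hu hv
      have hb : p b := hp _ _ hadj hu
      have : (SimpleGraph.map f (SimpleGraph.comap Subtype.val H)).Adj (f ⟨a, hu⟩) (f ⟨b, hb⟩) :=
        (SimpleGraph.map_adj f _ _ _).mpr ⟨⟨a, hu⟩, ⟨b, hb⟩, by simpa using hadj, rfl, rfl⟩
      exact this.reachable.trans (ih hb hv)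
  obtain ⟨w⟩ := hr
  obtain ⟨dv, hd⟩ := d
  obtain ⟨dv', hd'⟩ := d'
  exact aux _ _ w hd hd'

lemma nat_card_subtype [Fintype β] (p : β → Prop) :
    Nat.card {x : β // p x} = (Finset.univ.filter p).card := by
  rw [Nat.card_eq_fintype_card]
  convert Fintype.card_subtype p

lemma card_le_fiber [Fintype β] (H : SimpleGraph β) (S : Finset H.ConnectedComponent) :
    S.card ≤ (Finset.univ.filter fun x => H.connectedComponentMk x ∈ S).card := by
  have hrep : ∀ C : H.ConnectedComponent, ∃ x : β, H.connectedComponentMk x = C :=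
    fun C => C.exists_rep
  set rep : H.ConnectedComponent → β := fun C => (hrep C).choose with hrepdef
  have hrep1 : ∀ C, H.connectedComponentMk (rep C) = C := fun C => (hrep C).choose_spec
  refine Finset.card_le_card_of_injOn rep (fun C hC => ?_) ?_
  · rw [Finset.mem_coe]; simp only [Finset.mem_filter, Finset.mem_univ, true_and, hrep1]; exact hC
  · intro C _ C' _ h
    rw [← hrep1 C, ← hrep1 C', h]

lemma fiber_split [Fintype β] (H : SimpleGraph β) (S : Finset H.ConnectedComponent)
    {C : H.ConnectedComponent} (hC : C ∈ S) :
    (Finset.univ.filter fun x => H.connectedComponentMk x ∈ S).card =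
      (Finset.univ.filter fun x => H.connectedComponentMk x = C).card +
      (Finset.univ.filter fun x => H.connectedComponentMk x ∈ S.erase C).card := by
  rw [← Finset.card_union_of_disjoint]
  · congr 1
    ext x
    simp only [Finset.mem_union, Finset.mem_filter, Finset.mem_univ, true_and, Finset.mem_erase]
    constructor
    · intro h
      by_cases hx : H.connectedComponentMk x = C
      · exact Or.inl hx
      · exact Or.inr ⟨hx, h⟩
    · rintro (h | ⟨_, h⟩)
      · rwa [h]
      · exact h
  · rw [Finset.disjoint_left]
    intro x hx hx'
    simp only [Finset.mem_filter, Finset.mem_univ, true_and, Finset.mem_erase] at hx hx'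
    exact hx'.1 hx

lemma rec_main [Fintype α] [Fintype β] (H : SimpleGraph β)
    (hfib : ∀ C : H.ConnectedComponent,
      2 ≤ (Finset.univ.filter fun x => H.connectedComponentMk x = C).card) :
    ∀ (n : ℕ) (S : Finset H.ConnectedComponent), S.card = n → S.Nonempty →
    ∀ (G : SimpleGraph α) (W : Finset α),
      Nat.card G.ConnectedComponent + S.card ≤
        (Finset.univ.filter fun x => H.connectedComponentMk x ∈ S).card + 1 →
      W.card + (Finset.univ.filter fun x => H.connectedComponentMk x ∈ S).card ≤
        Fintype.card α →
      (∀ v : α, ∃ w, G.Reachable v w ∧ w ∉ W) →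
      ∃ f : {x : β // H.connectedComponentMk x ∈ S} ↪ α,
        (∀ x, f x ∉ W) ∧
          (G ⊔ SimpleGraph.map f (SimpleGraph.comap Subtype.val H)).Connected := by
  intro n
  induction n with
  | zero =>
    intro S hcard hS
    rw [Finset.card_eq_zero] at hcard
    subst hcard
    exact absurd hS (by simp)
  | succ k IH =>
    intro S hcard hS G W h2 h3 h4
    letI : Fintype G.ConnectedComponent := Fintype.ofFinite _
    set nS := (Finset.univ.filter fun x => H.connectedComponentMk x ∈ S).card with hnS
    have hg : Nat.card G.ConnectedComponent = Fintype.card G.ConnectedComponent :=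
      Nat.card_eq_fintype_card
    set g := Fintype.card G.ConnectedComponent with hgdef
    rw [hg] at h2
    -- representatives avoiding W
    have hrepW : ∀ D : G.ConnectedComponent, ∃ v, G.connectedComponentMk v = D ∧ v ∉ W := by
      intro D
      obtain ⟨u, hu⟩ := D.exists_rep
      obtain ⟨w, hw1, hw2⟩ := h4 u
      exact ⟨w, (ConnectedComponent.sound hw1.symm).trans hu, hw2⟩
    set r : G.ConnectedComponent → α := fun D => (hrepW D).choose with hrdef
    have hr1 : ∀ D, G.connectedComponentMk (r D) = D := fun D => (hrepW D).choose_spec.1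
    have hr2 : ∀ D, r D ∉ W := fun D => (hrepW D).choose_spec.2
    have hrinj : Function.Injective r := by
      intro D D' h
      rw [← hr1 D, ← hr1 D', h]
    -- closedness of the predicate
    have hp : ∀ x y : β, H.Adj x y → H.connectedComponentMk x ∈ S →
        H.connectedComponentMk y ∈ S := by
      intro x y hxy hx
      rwa [ConnectedComponent.sound hxy.reachable.symm]
    rcases Nat.eq_zero_or_pos k with hk0 | hkpos
    · -- base case : one component
      subst hk0
      obtain ⟨C, hC⟩ := Finset.card_eq_one.mp hcard
      subst hC
      have hg_le : g ≤ nS := by omega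
      set T : Finset α := Finset.univ.image r with hT
      have hTcard : T.card = g := by
        rw [hT, Finset.card_image_of_injective _ hrinj, Finset.card_univ]
      set U : Finset α := Finset.univ \ W with hU
      have hTU : T ⊆ U := by
        intro t ht
        rw [hT, Finset.mem_image] at ht
        obtain ⟨D, _, rfl⟩ := ht
        simp [hU, hr2 D]
      have hUcard : nS ≤ U.card := by
        rw [hU, Finset.card_sdiff_of_subset (Finset.subset_univ W), Finset.card_univ]
        omega
      have hδ : Fintype.card {x : β // H.connectedComponentMk x ∈ ({C} : Finset _)} = nS := by
        rw [Fintype.card_subtype]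
      obtain ⟨f, hcov, hfU⟩ := exists_emb (δ := {x : β // H.connectedComponentMk x ∈ ({C} : Finset _)})
        hTU (by omega) (by omega)
      refine ⟨f, fun x => ?_, ?_⟩
      · have := hfU x
        rw [hU, Finset.mem_sdiff] at this
        exact this.2
      · have hne : Nonempty α := by
          have h2f : (2 : ℕ) ≤ nS := le_trans (hfib C) (by
            apply Finset.card_le_card
            intro x hx
            simp only [Finset.mem_filter, Finset.mem_univ, true_and] at hx ⊢
            simp [hx])
          have : 0 < Fintype.card α := by omega
          exact Fintype.card_pos_iff.mp this
        have key : ∀ u : α,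
            ∃ d, (G ⊔ SimpleGraph.map f (SimpleGraph.comap Subtype.val H)).Reachable u (f d) := by
          intro u
          have hmem : r (G.connectedComponentMk u) ∈ T := by
            rw [hT, Finset.mem_image]; exact ⟨_, Finset.mem_univ _, rfl⟩
          obtain ⟨d, hd⟩ := hcov _ hmem
          refine ⟨d, ?_⟩
          rw [hd]
          have : G.Reachable u (r (G.connectedComponentMk u)) :=
            (ConnectedComponent.exact (hr1 (G.connectedComponentMk u))).symm
          exact this.mono le_sup_left
        constructor
        intro u v
        obtain ⟨du, hdu⟩ := key u
        obtain ⟨dv, hdv⟩ := key v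
        have hreach : H.Reachable du.val dv.val := by
          apply ConnectedComponent.exact
          have h1 := du.2
          have h2 := dv.2
          simp only [Finset.mem_singleton] at h1 h2
          rw [h1, h2]
        have := (map_reach H _ hp f du dv hreach).mono
          (le_sup_right : _ ≤ G ⊔ SimpleGraph.map f (SimpleGraph.comap Subtype.val H))
        exact (hdu.trans this).trans hdv.symm
    · -- inductive step
      obtain ⟨C, hC⟩ := hS
      set S' := S.erase C with hS'def
      have hS'card : S'.card = k := by
        rw [hS'def, Finset.card_erase_of_mem hC, hcard]
        omega
      have hS'ne : S'.Nonempty := Finset.card_pos.mp (by omega)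
      set c := (Finset.univ.filter fun x => H.connectedComponentMk x = C).card with hcdef
      have hc2 : 2 ≤ c := hfib C
      set nS' := (Finset.univ.filter fun x => H.connectedComponentMk x ∈ S').card with hnS'def
      have hsplit : nS = c + nS' := fiber_split H S hC
      have hk_le : k ≤ nS' := hS'card ▸ card_le_fiber H S'
      have hnS'2 : 2 ≤ nS' := by
        obtain ⟨C', hC'⟩ := hS'ne
        refine le_trans (hfib C') (Finset.card_le_card ?_)
        intro x hx
        simp only [Finset.mem_filter, Finset.mem_univ, true_and] at hx ⊢
        rw [hx]; exact hC'
      -- an anchor pair of distinct reachable free vertices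
      have hanchor : ∃ a b : α, a ∉ W ∧ b ∉ W ∧ a ≠ b ∧ G.Reachable a b := by
        by_contra hcon
        push_neg at hcon
        have hinj : (Finset.univ \ W).card ≤ (Finset.univ : Finset G.ConnectedComponent).card := by
          refine Finset.card_le_card_of_injOn G.connectedComponentMk
            (fun _ _ => Finset.mem_univ _) ?_
          intro x hx y hy hmk
          simp only [Finset.coe_sdiff, Set.mem_diff, Finset.coe_univ, Set.mem_univ, true_and,
            Finset.mem_coe] at hx hy
          by_contra hne
          exact hcon x y hx hy hne (ConnectedComponent.exact hmk)
        rw [Finset.card_sdiff_of_subset (Finset.subset_univ W), Finset.card_univ, Finset.card_univ] at hinj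
        omega
      obtain ⟨a, b, haW, hbW, hab, hreachab⟩ := hanchor
      set A := G.connectedComponentMk a with hAdef
      set r' : G.ConnectedComponent → α := Function.update r A a with hr'def
      have hr'1 : ∀ D, G.connectedComponentMk (r' D) = D := by
        intro D
        by_cases hDA : D = A
        · subst hDA; rw [hr'def, Function.update_self]
        · rw [hr'def, Function.update_of_ne hDA]; exact hr1 D
      have hr'2 : ∀ D, r' D ∉ W := by
        intro D
        by_cases hDA : D = A
        · subst hDA; rw [hr'def, Function.update_self]; exact haW
        · rw [hr'def, Function.update_of_ne hDA]; exact hr2 D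
      have hr'inj : Function.Injective r' := by
        intro D D' h
        rw [← hr'1 D, ← hr'1 D', h]
      have hnea : Nonempty α := ⟨a⟩
      have hgpos : 1 ≤ g := by
        rw [hgdef]
        exact Fintype.card_pos_iff.mpr ⟨A⟩
      set t := min c g with htdef
      have ht1 : 1 ≤ t := le_min (by omega) hgpos
      obtain ⟨K, hAK, hKuniv, hKcard⟩ :=
        Finset.exists_subsuperset_card_eq
          (Finset.singleton_subset_iff.mpr (Finset.mem_univ A))
          (by simpa using ht1) (by rw [Finset.card_univ]; exact min_le_right c g)
      have hAK' : A ∈ K := hAK (Finset.mem_singleton_self A)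
      set T₀ : Finset α := K.image r' with hT₀def
      have hT₀card : T₀.card = t := by
        rw [hT₀def, Finset.card_image_of_injective _ hr'inj, hKcard]
      have hbT₀ : b ∉ T₀ := by
        intro hmem
        rw [hT₀def, Finset.mem_image] at hmem
        obtain ⟨D, hD, hDb⟩ := hmem
        have h1 : D = G.connectedComponentMk b := by rw [← hr'1 D, hDb]
        have h2 : A = G.connectedComponentMk b := ConnectedComponent.sound hreachab
        have : r' A = a := by rw [hr'def, Function.update_self]
        rw [h1, ← h2] at hDb
        exact hab (this ▸ hDb)
      set U : Finset α := (Finset.univ \ W).erase b with hUdef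
      have hT₀U : T₀ ⊆ U := by
        intro x hx
        rw [hT₀def, Finset.mem_image] at hx
        obtain ⟨D, hD, rfl⟩ := hx
        rw [hUdef, Finset.mem_erase, Finset.mem_sdiff]
        refine ⟨?_, Finset.mem_univ _, hr'2 D⟩
        intro hrb
        exact hbT₀ (by rw [← hrb, hT₀def]; exact Finset.mem_image_of_mem _ hD)
      have hbU : b ∈ Finset.univ \ W := by
        rw [Finset.mem_sdiff]; exact ⟨Finset.mem_univ _, hbW⟩
      have hUcard : c ≤ U.card := by
        rw [hUdef, Finset.card_erase_of_mem hbU, Finset.card_sdiff_of_subset (Finset.subset_univ W),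
          Finset.card_univ]
        omega
      obtain ⟨T, hT₀T, hTU, hTcard⟩ :=
        Finset.exists_subsuperset_card_eq hT₀U (hT₀card ▸ min_le_left c g) hUcard
      have haT : a ∈ T := by
        apply hT₀T
        rw [hT₀def]
        have : r' A = a := by rw [hr'def, Function.update_self]
        exact this ▸ Finset.mem_image_of_mem _ hAK'
      have hTW : ∀ x ∈ T, x ∉ W ∧ x ≠ b := by
        intro x hx
        have := hTU hx
        rw [hUdef, Finset.mem_erase, Finset.mem_sdiff] at this
        exact ⟨this.2.2, this.1⟩
      set G' := G ⊔ SimpleGraph.fromRel (fun u v => u = a ∧ v ∈ T) with hG'def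
      letI : Fintype G'.ConnectedComponent := Fintype.ofFinite _
      set Φ : G.ConnectedComponent → G'.ConnectedComponent :=
        ConnectedComponent.map (Hom.ofLE (le_sup_left : G ≤ G')) with hΦdef
      have hΦmk : ∀ v : α, Φ (G.connectedComponentMk v) = G'.connectedComponentMk v :=
        fun v => rfl
      have hΦsurj : ∀ E : G'.ConnectedComponent, ∃ D, Φ D = E := by
        intro E
        obtain ⟨v, hv⟩ := E.exists_rep
        exact ⟨G.connectedComponentMk v, by rw [hΦmk]; exact hv⟩
      have hmerge : ∀ D ∈ K, Φ D = Φ A := by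
        intro D hD
        by_cases hDA : D = A
        · rw [hDA]
        · have hne : r' D ≠ a := by
            intro h
            apply hDA
            rw [← hr'1 D, h, hAdef]
          have hadj : G'.Adj (r' D) a := by
            rw [hG'def, sup_adj, fromRel_adj]
            exact Or.inr ⟨hne, Or.inr ⟨rfl, hT₀T (by rw [hT₀def]; exact Finset.mem_image_of_mem _ hD)⟩⟩
          have : G'.connectedComponentMk (r' D) = G'.connectedComponentMk a :=
            ConnectedComponent.sound hadj.reachable
          rw [← hr'1 D, hΦmk, this, hAdef, hΦmk]
      have hcount : Fintype.card G'.ConnectedComponent + t ≤ g + 1 := by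
        have hsub : (Finset.univ : Finset G'.ConnectedComponent) ⊆
            (Finset.univ \ K.erase A).image Φ := by
          intro E _
          obtain ⟨D, hD⟩ := hΦsurj E
          rw [Finset.mem_image]
          by_cases hDK : D ∈ K.erase A
          · refine ⟨A, ?_, ?_⟩
            · rw [Finset.mem_sdiff]
              exact ⟨Finset.mem_univ _, Finset.notMem_erase A K⟩
            · rw [← hmerge D (Finset.mem_of_mem_erase hDK), hD]
          · exact ⟨D, by rw [Finset.mem_sdiff]; exact ⟨Finset.mem_univ _, hDK⟩, hD⟩
        have h1 := Finset.card_le_card hsub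
        have h2 := Finset.card_image_le (f := Φ) (s := Finset.univ \ K.erase A)
        rw [Finset.card_sdiff_of_subset (Finset.subset_univ _), Finset.card_univ,
          Finset.card_erase_of_mem hAK', hKcard] at h2
        rw [Finset.card_univ] at h1
        omega
      have hmincase : t = c ∨ t = g := min_choice c g
      have h2' : Nat.card G'.ConnectedComponent + S'.card ≤ nS' + 1 := by
        rw [Nat.card_eq_fintype_card, hS'card]
        omega
      have h3' : (W ∪ T).card + nS' ≤ Fintype.card α := by
        have := Finset.card_union_le W T
        omega
      have h4' : ∀ v : α, ∃ w, G'.Reachable v w ∧ w ∉ W ∪ T := by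
        intro v
        obtain ⟨w, hw1, hw2⟩ := h4 v
        by_cases hwT : w ∈ T
        · refine ⟨b, ?_, ?_⟩
          · have hwa : G'.Reachable w a := by
              by_cases hwa' : w = a
              · rw [hwa']
              · refine Adj.reachable ?_
                rw [hG'def, sup_adj, fromRel_adj]
                exact Or.inr ⟨hwa', Or.inr ⟨rfl, hwT⟩⟩
            exact ((hw1.mono le_sup_left).trans hwa).trans (hreachab.mono le_sup_left)
          · rw [Finset.mem_union]
            push_neg
            refine ⟨hbW, ?_⟩
            intro hbT
            exact (hTW b hbT).2 rfl
        · exact ⟨w, hw1.mono le_sup_left, by rw [Finset.mem_union]; push_neg; exact ⟨hw2, hwT⟩⟩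
      obtain ⟨f', hf'W, hf'conn⟩ := IH S' hS'card hS'ne G' (W ∪ T) h2' h3' h4'
      -- the placement of the fiber of C onto T
      have hcardPC : Fintype.card {x : β // H.connectedComponentMk x = C} = Fintype.card T := by
        rw [Fintype.card_subtype, Fintype.card_coe, hTcard]
      set P : {x : β // H.connectedComponentMk x = C} ≃ T := Fintype.equivOfCardEq hcardPC
        with hPdef
      have hmemS' : ∀ (x : β), H.connectedComponentMk x ∈ S →
          H.connectedComponentMk x ≠ C → H.connectedComponentMk x ∈ S' := by
        intro x hx hxc
        rw [hS'def, Finset.mem_erase]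
        exact ⟨hxc, hx⟩
      set ffun : {x : β // H.connectedComponentMk x ∈ S} → α := fun x =>
        if h : H.connectedComponentMk x.val = C then (P ⟨x.val, h⟩ : α)
        else f' ⟨x.val, hmemS' x.val x.2 h⟩ with hffun
      have hfval1 : ∀ (x : β) (hx : H.connectedComponentMk x ∈ S)
          (h : H.connectedComponentMk x = C), ffun ⟨x, hx⟩ = (P ⟨x, h⟩ : α) := by
        intro x hx h
        rw [hffun]
        exact dif_pos h
      have hfval2 : ∀ (x : β) (hx : H.connectedComponentMk x ∈ S)
          (h : ¬ H.connectedComponentMk x = C), ffun ⟨x, hx⟩ = f' ⟨x, hmemS' x hx h⟩ := by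
        intro x hx h
        rw [hffun]
        exact dif_neg h
      have hPT : ∀ z, (P z : α) ∈ T := fun z => (P z).2
      have hf'nW : ∀ z, (f' z : α) ∉ W ∪ T := hf'W
      have hfinj : Function.Injective ffun := by
        rintro ⟨x, hx⟩ ⟨y, hy⟩ hxy
        by_cases h1 : H.connectedComponentMk x = C <;>
          by_cases h2 : H.connectedComponentMk y = C
        · rw [hfval1 x hx h1, hfval1 y hy h2] at hxy
          have h := P.injective (Subtype.ext hxy)
          have hval : x = y := congrArg Subtype.val h
          exact Subtype.ext hval
        · rw [hfval1 x hx h1, hfval2 y hy h2] at hxy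
          exact absurd (hxy ▸ hPT ⟨x, h1⟩)
            (fun hmem => hf'nW _ (Finset.mem_union_right _ hmem))
        · rw [hfval2 x hx h1, hfval1 y hy h2] at hxy
          exact absurd (hxy ▸ hPT ⟨y, h2⟩)
            (fun hmem => hf'nW _ (Finset.mem_union_right _ hmem))
        · rw [hfval2 x hx h1, hfval2 y hy h2] at hxy
          have h := f'.injective hxy
          have hval : x = y := congrArg Subtype.val h
          exact Subtype.ext hval
      set f : {x : β // H.connectedComponentMk x ∈ S} ↪ α := ⟨ffun, hfinj⟩ with hfdef
      refine ⟨f, ?_, ?_⟩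
      · rintro ⟨x, hx⟩
        by_cases h1 : H.connectedComponentMk x = C
        · show ffun ⟨x, hx⟩ ∉ W
          rw [hfval1 x hx h1]
          exact (hTW _ (hPT ⟨x, h1⟩)).1
        · show ffun ⟨x, hx⟩ ∉ W
          rw [hfval2 x hx h1]
          intro hmem
          exact hf'nW _ (Finset.mem_union_left _ hmem)
      · -- connectivity transfer from the (G', f') graph
        set FG := G ⊔ SimpleGraph.map f (SimpleGraph.comap Subtype.val H) with hFGdef
        have hstar : ∀ x ∈ T, FG.Reachable a x := by
          intro x hx
          set xa := P.symm ⟨a, haT⟩ with hxadef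
          set xt := P.symm ⟨x, hx⟩ with hxtdef
          have hxa2 : H.connectedComponentMk xa.val = C := xa.2
          have hxt2 : H.connectedComponentMk xt.val = C := xt.2
          have hxaS : H.connectedComponentMk xa.val ∈ S := by rw [hxa2]; exact hC
          have hxtS : H.connectedComponentMk xt.val ∈ S := by rw [hxt2]; exact hC
          have hfa : f ⟨xa.val, hxaS⟩ = a := by
            have h1 : ffun ⟨xa.val, hxaS⟩ = (P ⟨xa.val, hxa2⟩ : α) := hfval1 _ _ hxa2
            have h2 : (⟨xa.val, hxa2⟩ : {x : β // H.connectedComponentMk x = C}) = xa :=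
              Subtype.ext rfl
            have h3 : P xa = ⟨a, haT⟩ := by rw [hxadef]; exact P.apply_symm_apply _
            show ffun _ = a
            rw [h1, h2, h3]
          have hft : f ⟨xt.val, hxtS⟩ = x := by
            have h1 : ffun ⟨xt.val, hxtS⟩ = (P ⟨xt.val, hxt2⟩ : α) := hfval1 _ _ hxt2
            have h2 : (⟨xt.val, hxt2⟩ : {x : β // H.connectedComponentMk x = C}) = xt :=
              Subtype.ext rfl
            have h3 : P xt = ⟨x, hx⟩ := by rw [hxtdef]; exact P.apply_symm_apply _
            show ffun _ = x
            rw [h1, h2, h3]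
          have hreach : H.Reachable xa.val xt.val := by
            apply ConnectedComponent.exact
            rw [hxa2, hxt2]
          have := (map_reach H _ hp f ⟨xa.val, hxaS⟩ ⟨xt.val, hxtS⟩ hreach).mono
            (le_sup_right : _ ≤ FG)
          rwa [hfa, hft] at this
        have hedges : ∀ u v, (G' ⊔ SimpleGraph.map f'
            (SimpleGraph.comap Subtype.val H)).Adj u v → FG.Reachable u v := by
          intro u v hadj
          rcases hadj with hadj | hadj
          · rcases hadj with hadj | hadj
            · exact (hadj.reachable).mono le_sup_left
            · rw [fromRel_adj] at hadj
              rcases hadj with ⟨hne, ⟨rfl, hvT⟩ | ⟨rfl, huT⟩⟩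
              · exact hstar v hvT
              · exact (hstar u huT).symm
          · rw [map_adj] at hadj
            obtain ⟨x, y, hxy, rfl, rfl⟩ := hadj
            have hxS : H.connectedComponentMk x.val ∈ S := Finset.mem_of_mem_erase x.2
            have hyS : H.connectedComponentMk y.val ∈ S := Finset.mem_of_mem_erase y.2
            have hxC : ¬ H.connectedComponentMk x.val = C := (Finset.mem_erase.mp x.2).1
            have hyC : ¬ H.connectedComponentMk y.val = C := (Finset.mem_erase.mp y.2).1
            have hfx : f ⟨x.val, hxS⟩ = f' x := by
              show ffun _ = _
              rw [hfval2 _ _ hxC]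
            have hfy : f ⟨y.val, hyS⟩ = f' y := by
              show ffun _ = _
              rw [hfval2 _ _ hyC]
            refine Reachable.mono (le_sup_right : _ ≤ FG) (Adj.reachable ?_)
            rw [map_adj]
            exact ⟨⟨x.val, hxS⟩, ⟨y.val, hyS⟩, by simpa using hxy, hfx, hfy⟩
        exact conn_transfer hedges hf'conn


/-- Necessity of (i). -/
lemma nec_i [Fintype α] [Fintype β] (G : SimpleGraph α) (H : SimpleGraph β)
    (hcard : Fintype.card β ≤ Fintype.card α)
    (hdis : ¬ H.Connected) (hne : Nonempty β) (φ : β ↪ α)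
    (hconn : (G ⊔ SimpleGraph.map φ H).Connected) :
    {v : α | ∀ w : α, ¬ G.Adj v w}.ncard + Nat.card H.ConnectedComponent ≤
      Fintype.card β := by
  set F := G ⊔ SimpleGraph.map φ H with hF
  set I : Set α := {v : α | ∀ w : α, ¬ G.Adj v w} with hI
  obtain ⟨u0, v0, hunr⟩ : ∃ u v : β, ¬ H.Reachable u v := by
    by_contra h
    push_neg at h
    exact hdis ⟨fun u v => h u v⟩
  have huv0 : u0 ≠ v0 := fun h => hunr (h ▸ Reachable.refl _)
  have hb2 : 2 ≤ Fintype.card β := Fintype.one_lt_card_iff_nontrivial.mpr ⟨u0, v0, huv0⟩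
  have ha2 : 2 ≤ Fintype.card α := le_trans hb2 hcard
  -- isolated vertices of G lie in the range of φ
  have hIrange : I ⊆ Set.range φ := by
    intro v hv
    by_contra hvr
    have hiso : ∀ w, ¬ F.Adj v w := by
      intro w hw
      rcases hw with hw | hw
      · exact hv w hw
      · rw [map_adj] at hw
        obtain ⟨x, y, _, hx, _⟩ := hw
        exact hvr ⟨x, hx⟩
    obtain ⟨u, hu⟩ := Fintype.exists_ne_of_one_lt_card (by omega) v
    obtain ⟨p⟩ := hconn.preconnected v u
    cases p with
    | nil => exact hu rfl
    | cons hadj _ => exact hiso _ hadj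
  -- in each component of H, some vertex has non isolated image
  have hcomp : ∀ C : H.ConnectedComponent,
      ∃ x : β, H.connectedComponentMk x = C ∧ φ x ∉ I := by
    intro C
    by_contra h
    push_neg at h
    set Z : Set α := {z : α | ∃ x : β, H.connectedComponentMk x = C ∧ φ x = z} with hZ
    have hclosed : ∀ z ∈ Z, ∀ w, F.Adj z w → w ∈ Z := by
      rintro z ⟨x, hqx, rfl⟩ w hw
      rcases hw with hw | hw
      · exact absurd hw (h x hqx w)
      · rw [map_adj] at hw
        obtain ⟨x', y', hxy, hx', hy'⟩ := hw
        have hxx : x' = x := φ.injective hx'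
        subst hxx
        exact ⟨y', by rw [← hqx]; exact (ConnectedComponent.sound hxy.reachable).symm, hy'⟩
    obtain ⟨y, hy⟩ : ∃ y : β, H.connectedComponentMk y ≠ C := by
      by_cases hu : H.connectedComponentMk u0 = C
      · refine ⟨v0, fun hv => hunr (ConnectedComponent.exact (hu.trans hv.symm))⟩
      · exact ⟨u0, hu⟩
    obtain ⟨x₀, hx₀⟩ := C.exists_rep
    have hmem : φ x₀ ∈ Z := ⟨x₀, hx₀, rfl⟩
    have := closed_walk hclosed (hconn.preconnected (φ x₀) (φ y)) hmem
    obtain ⟨x', hqx', hφx'⟩ := this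
    exact hy (by rw [← hqx', φ.injective hφx'])
  -- counting
  set J : Set β := {x : β | φ x ∈ I} with hJ
  have hIJ : φ '' J = I := by
    apply Set.Subset.antisymm
    · rintro _ ⟨x, hx, rfl⟩; exact hx
    · intro v hv
      obtain ⟨x, rfl⟩ := hIrange hv
      exact ⟨x, hv, rfl⟩
  have hIcard : I.ncard = J.ncard := by
    rw [← hIJ, Set.ncard_image_of_injective _ φ.injective]
  have hkJ : Nat.card H.ConnectedComponent ≤ Nat.card (↥(Jᶜ)) := by
    have hchoice : ∀ C : H.ConnectedComponent, ∃ x : β, x ∈ Jᶜ ∧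
        H.connectedComponentMk x = C := by
      intro C
      obtain ⟨x, hx1, hx2⟩ := hcomp C
      exact ⟨x, hx2, hx1⟩
    set ξ : H.ConnectedComponent → ↥(Jᶜ) := fun C => ⟨(hchoice C).choose, (hchoice C).choose_spec.1⟩
    have hξ : ∀ C, H.connectedComponentMk (ξ C).val = C := fun C => (hchoice C).choose_spec.2
    refine Nat.card_le_card_of_injective ξ ?_
    intro C C' h
    rw [← hξ C, ← hξ C', h]
  rw [Nat.card_coe_set_eq] at hkJ
  have hsum : J.ncard + (Jᶜ).ncard = Nat.card β := Set.ncard_add_ncard_compl J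
  rw [Nat.card_eq_fintype_card] at hsum
  omega

/-- Necessity of (ii). -/
lemma nec_ii [Fintype α] [Fintype β] (G : SimpleGraph α) (H : SimpleGraph β)
    (hne : Nonempty β) (φ : β ↪ α)
    (hconn : (G ⊔ SimpleGraph.map φ H).Connected) :
    Nat.card G.ConnectedComponent + Nat.card H.ConnectedComponent ≤
      Fintype.card β + 1 := by
  set F := G ⊔ SimpleGraph.map φ H with hF
  set rel : (G.ConnectedComponent ⊕ H.ConnectedComponent) →
      (G.ConnectedComponent ⊕ H.ConnectedComponent) → Prop := fun u v =>
    ∃ x : β, u = Sum.inl (G.connectedComponentMk (φ x)) ∧ v = Sum.inr (H.connectedComponentMk x) with hrel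
  set B := SimpleGraph.fromRel rel with hB
  have x00 : β := Classical.arbitrary β
  -- B is connected
  have key : ∀ u v : α, F.Reachable u v →
      B.Reachable (Sum.inl (G.connectedComponentMk u)) (Sum.inl (G.connectedComponentMk v)) := by
    intro u v hr
    obtain ⟨p⟩ := hr
    induction p with
    | nil => exact Reachable.refl _
    | @cons a b c hadj p ih =>
      refine Reachable.trans ?_ ih
      rcases hadj with hadj | hadj
      · rw [ConnectedComponent.sound hadj.reachable]
      · rw [map_adj] at hadj
        obtain ⟨x, y, hxy, rfl, rfl⟩ := hadj
        have e1 : B.Adj (Sum.inl (G.connectedComponentMk (φ x))) (Sum.inr (H.connectedComponentMk x)) := by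
          rw [hB, fromRel_adj]
          exact ⟨by simp, Or.inl ⟨x, rfl, rfl⟩⟩
        have e2 : B.Adj (Sum.inl (G.connectedComponentMk (φ y))) (Sum.inr (H.connectedComponentMk y)) := by
          rw [hB, fromRel_adj]
          exact ⟨by simp, Or.inl ⟨y, rfl, rfl⟩⟩
        have hxy' : H.connectedComponentMk x = H.connectedComponentMk y := ConnectedComponent.sound hxy.reachable
        rw [hxy'] at e1
        exact e1.reachable.trans e2.reachable.symm
  have hBconn : B.Connected := by
    rw [connected_iff]
    refine ⟨?_, ⟨Sum.inr (H.connectedComponentMk x00)⟩⟩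
    have hstep : ∀ E : G.ConnectedComponent ⊕ H.ConnectedComponent,
        ∃ x : β, B.Reachable E (Sum.inl (G.connectedComponentMk (φ x))) := by
      intro E
      rcases E with D | C
      · obtain ⟨v, hv⟩ := D.exists_rep
        refine ⟨x00, ?_⟩
        have hv' : G.connectedComponentMk v = D := hv
        have := key v (φ x00) (hconn.preconnected v (φ x00))
        rwa [hv'] at this
      · obtain ⟨x, hx⟩ := C.exists_rep
        have hx' : H.connectedComponentMk x = C := hx
        refine ⟨x, Adj.reachable ?_⟩
        rw [hB, fromRel_adj]
        exact ⟨by simp, Or.inr ⟨x, rfl, by rw [← hx']⟩⟩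
    intro E E'
    obtain ⟨x, hx⟩ := hstep E
    obtain ⟨x', hx'⟩ := hstep E'
    exact (hx.trans (key (φ x) (φ x') (hconn.preconnected _ _))).trans hx'.symm
  -- parent pointers towards a root give the bound
  letI : Fintype G.ConnectedComponent := Fintype.ofFinite _
  letI : Fintype H.ConnectedComponent := Fintype.ofFinite _
  set root : G.ConnectedComponent ⊕ H.ConnectedComponent := Sum.inr (H.connectedComponentMk x00) with hroot
  have hparent : ∀ v : G.ConnectedComponent ⊕ H.ConnectedComponent, v ≠ root →
      ∃ u, B.Adj v u ∧ B.dist u root < B.dist v root := by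
    intro v hv
    obtain ⟨p, hp⟩ := hBconn.exists_walk_length_eq_dist v root
    cases p with
    | nil => exact absurd rfl hv
    | @cons _ b _ hadj p' =>
      refine ⟨b, hadj, ?_⟩
      have h1 : B.dist b root ≤ p'.length := dist_le p'
      rw [Walk.length_cons] at hp
      omega
  -- witnesses
  have hwit : ∀ v u : G.ConnectedComponent ⊕ H.ConnectedComponent, B.Adj v u →
      ∃ x : β, (v = Sum.inl (G.connectedComponentMk (φ x)) ∧ u = Sum.inr (H.connectedComponentMk x)) ∨
        (v = Sum.inr (H.connectedComponentMk x) ∧ u = Sum.inl (G.connectedComponentMk (φ x))) := by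
    intro v u hadj
    rw [hB, fromRel_adj] at hadj
    obtain ⟨-, h | h⟩ := hadj
    · obtain ⟨x, h1, h2⟩ := h
      exact ⟨x, Or.inl ⟨h1, h2⟩⟩
    · obtain ⟨x, h1, h2⟩ := h
      exact ⟨x, Or.inr ⟨h2, h1⟩⟩
  set par : {v : G.ConnectedComponent ⊕ H.ConnectedComponent // v ≠ root} →
      G.ConnectedComponent ⊕ H.ConnectedComponent :=
    fun v => (hparent v.val v.2).choose with hpar
  have hpar1 : ∀ v, B.Adj v.val (par v) := fun v => (hparent v.val v.2).choose_spec.1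
  have hpar2 : ∀ v, B.dist (par v) root < B.dist v.val root :=
    fun v => (hparent v.val v.2).choose_spec.2
  set ξ : {v : G.ConnectedComponent ⊕ H.ConnectedComponent // v ≠ root} → β :=
    fun v => (hwit v.val (par v) (hpar1 v)).choose with hξ
  have hξspec : ∀ v, (v.val = Sum.inl (G.connectedComponentMk (φ (ξ v))) ∧ par v = Sum.inr (H.connectedComponentMk (ξ v))) ∨
      (v.val = Sum.inr (H.connectedComponentMk (ξ v)) ∧ par v = Sum.inl (G.connectedComponentMk (φ (ξ v)))) :=
    fun v => (hwit v.val (par v) (hpar1 v)).choose_spec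
  have hξinj : Function.Injective ξ := by
    intro v w h
    by_cases hvw : v.val = w.val
    · exact Subtype.ext hvw
    · exfalso
      have hv := hξspec v
      have hw := hξspec w
      rw [h] at hv
      have hcross : par v = w.val ∧ par w = v.val := by
        rcases hv with ⟨hv1, hv2⟩ | ⟨hv1, hv2⟩ <;> rcases hw with ⟨hw1, hw2⟩ | ⟨hw1, hw2⟩
        · exact absurd (hv1.trans hw1.symm) hvw
        · exact ⟨hv2.trans hw1.symm, hw2.trans hv1.symm⟩
        · exact ⟨hv2.trans hw1.symm, hw2.trans hv1.symm⟩
        · exact absurd (hv1.trans hw1.symm) hvw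
      have h1 := hpar2 v
      have h2 := hpar2 w
      rw [hcross.1] at h1
      rw [hcross.2] at h2
      omega
  have hcard1 : Fintype.card {v : G.ConnectedComponent ⊕ H.ConnectedComponent // v ≠ root} ≤
      Fintype.card β := Fintype.card_le_of_injective ξ hξinj
  have hcard2 : Fintype.card {v : G.ConnectedComponent ⊕ H.ConnectedComponent // v ≠ root} =
      Fintype.card (G.ConnectedComponent ⊕ H.ConnectedComponent) - 1 := by
    have h1 : Fintype.card {v : G.ConnectedComponent ⊕ H.ConnectedComponent // v = root} = 1 :=
      Fintype.card_subtype_eq root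
    have h2 := Fintype.card_subtype_compl (p := fun v : G.ConnectedComponent ⊕ H.ConnectedComponent => v = root)
    rw [h1] at h2
    exact h2
  have hγ : Fintype.card (G.ConnectedComponent ⊕ H.ConnectedComponent) =
      Fintype.card G.ConnectedComponent + Fintype.card H.ConnectedComponent := Fintype.card_sum
  have hγpos : 0 < Fintype.card (G.ConnectedComponent ⊕ H.ConnectedComponent) :=
    Fintype.card_pos_iff.mpr ⟨root⟩
  rw [Nat.card_eq_fintype_card, Nat.card_eq_fintype_card]
  omega


end SuperposeAux

/-- Let `|V(H)| ≤ |V(G)|`, `H` without isolated vertices and disconnected (nonempty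
and not connected). Then there is an injective `φ : V(H) ↪ V(G)` with `G ⊕_φ H`
connected iff (i) `i(G) ≤ |V(H)| - c(H)` and (ii) `c(G) ≤ |V(H)| - c(H) + 1`
(stated additively to avoid truncated subtraction). -/
theorem stmt6 {α β : Type*} [Fintype α] [Fintype β]
    (G : SimpleGraph α) (H : SimpleGraph β)
    (hcard : Fintype.card β ≤ Fintype.card α)
    (hiso : ∀ x : β, ∃ y : β, H.Adj x y)
    (hne : Nonempty β) (hdis : ¬ H.Connected) :
    (∃ φ : β ↪ α, (superpose G H φ).Connected) ↔
      ({v : α | ∀ w : α, ¬ G.Adj v w}.ncard + Nat.card H.ConnectedComponent ≤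
          Fintype.card β ∧
        Nat.card G.ConnectedComponent + Nat.card H.ConnectedComponent ≤
          Fintype.card β + 1) := by
  constructor
  · rintro ⟨φ, hconn⟩
    have hconn' : (G ⊔ SimpleGraph.map φ H).Connected := hconn
    exact ⟨nec_i G H hcard hdis hne φ hconn', nec_ii G H hne φ hconn'⟩
  · rintro ⟨-, hii⟩
    have hfib : ∀ C : H.ConnectedComponent,
        2 ≤ (Finset.univ.filter fun x => H.connectedComponentMk x = C).card := by
      intro C
      obtain ⟨x, hx⟩ := C.exists_rep
      have hx' : H.connectedComponentMk x = C := hx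
      obtain ⟨y, hy⟩ := hiso x
      have hy' : H.connectedComponentMk y = C := by
        rw [← hx']
        exact (ConnectedComponent.sound hy.reachable).symm
      rw [show (2 : ℕ) = 1 + 1 from rfl, Nat.add_one_le_iff, Finset.one_lt_card]
      exact ⟨x, by simp [hx'], y, by simp [hy'], hy.ne⟩
    letI : Fintype H.ConnectedComponent := Fintype.ofFinite _
    have huniv : (Finset.univ.filter fun x : β =>
        H.connectedComponentMk x ∈ (Finset.univ : Finset H.ConnectedComponent)).card
        = Fintype.card β := by
      simp
    have hSne : (Finset.univ : Finset H.ConnectedComponent).Nonempty :=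
      ⟨H.connectedComponentMk (Classical.arbitrary β), Finset.mem_univ _⟩
    have h2 : Nat.card G.ConnectedComponent +
        (Finset.univ : Finset H.ConnectedComponent).card ≤
        (Finset.univ.filter fun x : β =>
          H.connectedComponentMk x ∈ (Finset.univ : Finset H.ConnectedComponent)).card + 1 := by
      rw [huniv, Finset.card_univ, ← Nat.card_eq_fintype_card]
      exact hii
    have h3 : (∅ : Finset α).card + (Finset.univ.filter fun x : β =>
        H.connectedComponentMk x ∈ (Finset.univ : Finset H.ConnectedComponent)).card ≤
        Fintype.card α := by
      rw [huniv]
      simpa using hcard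
    have h4 : ∀ v : α, ∃ w, G.Reachable v w ∧ w ∉ (∅ : Finset α) :=
      fun v => ⟨v, Reachable.refl v, by simp⟩
    obtain ⟨f, -, hfconn⟩ := rec_main H hfib (Finset.univ : Finset H.ConnectedComponent).card
      Finset.univ rfl hSne G ∅ h2 h3 h4
    set e : β ↪ {x : β // H.connectedComponentMk x ∈ (Finset.univ : Finset H.ConnectedComponent)} :=
      ⟨fun x => ⟨x, Finset.mem_univ _⟩, fun a b h => congrArg Subtype.val h⟩ with hedef
    refine ⟨e.trans f, ?_⟩
    have hEq : superpose G H (e.trans f) =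
        G ⊔ SimpleGraph.map f (SimpleGraph.comap Subtype.val H) := by
      unfold superpose
      congr 1
      ext u v
      rw [map_adj, map_adj]
      constructor
      · rintro ⟨x, y, hxy, rfl, rfl⟩
        exact ⟨e x, e y, hxy, rfl, rfl⟩
      · rintro ⟨x, y, hxy, rfl, rfl⟩
        refine ⟨x.val, y.val, by simpa using hxy, ?_, ?_⟩
        · show f (e x.val) = f x
          exact congrArg f (Subtype.ext rfl)
        · show f (e y.val) = f y
          exact congrArg f (Subtype.ext rfl)
    rw [hEq]
    exact hfconn
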